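/- Let R be a diagonalizable linear operator on V⊗V with (R−q)(R−1)=0 where q≠1, q≠0. Let R_S = Im(R−1) and R_Λ = Im(R−q) (the eigenspaces for eigenvalues q and 1 respectively, so V⊗V = R_Λ ⊕ R_S). Then the subspace R_S^⊥ ⊗ R_S + R_Λ^⊥ ⊗ R_Λ of V*⊗V*⊗V⊗V equals the image of R*⊗R^{-1} − 1, where R* is the dual operator on V*⊗V*. -/

import Mathlib

set_option maxSynthPendingDepth 3

open TensorProduct

/-- For a subspace `p` of `M` and `q` of `N`, the subspace `p ⊗ q` of `M ⊗ N`. -/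
noncomputable def tensorSub {k M N : Type*} [Field k] [AddCommGroup M] [Module k M]
    [AddCommGroup N] [Module k N] (p : Submodule k M) (q : Submodule k N) :
    Submodule k (M ⊗[k] N) :=
  LinearMap.range (TensorProduct.mapIncl p q)

/-- The operator `R* ⊗ R⁻¹` on `(V⊗V)* ⊗ (V⊗V)`, where `V*⊗V*` is identified with
`(V⊗V)*`. -/
noncomputable def Rbar {k V : Type*} [Field k] [AddCommGroup V] [Module k V]
    (R Rinv : Module.End k (V ⊗[k] V)) :
    Module.End k (Module.Dual k (V ⊗[k] V) ⊗[k] (V ⊗[k] V)) :=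
  TensorProduct.map R.dualMap Rinv

lemma tensorSub_range {k M N : Type*} [Field k] [AddCommGroup M] [Module k M]
    [AddCommGroup N] [Module k N] (f : Module.End k M) (g : Module.End k N) :
    tensorSub (LinearMap.range f) (LinearMap.range g) =
      LinearMap.range (TensorProduct.map f g) := by
  rw [tensorSub, TensorProduct.range_mapIncl, TensorProduct.range_map_eq_span_tmul,
    Submodule.map₂_eq_span_image2]
  congr 1
  ext t
  simp only [Set.mem_image2, SetLike.mem_coe, LinearMap.mem_range, Set.mem_setOf_eq]
  constructor
  · rintro ⟨a, ⟨m, rfl⟩, b, ⟨n, rfl⟩, rfl⟩; exact ⟨m, n, rfl⟩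
  · rintro ⟨m, n, rfl⟩; exact ⟨f m, ⟨m, rfl⟩, g n, ⟨n, rfl⟩, rfl⟩

lemma ker_idem {k M : Type*} [Field k] [AddCommGroup M] [Module k M]
    (e : Module.End k M) (he : e * e = e) :
    LinearMap.ker e = LinearMap.range (1 - e) := by
  ext x
  simp only [LinearMap.mem_ker, LinearMap.mem_range]
  constructor
  · intro h
    exact ⟨x, by simp [LinearMap.sub_apply, h]⟩
  · rintro ⟨y, rfl⟩
    have h2 : (e * e) y = e y := by rw [he]
    simp only [Module.End.mul_apply] at h2
    rw [LinearMap.sub_apply, Module.End.one_apply, map_sub, h2, sub_self]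

set_option maxHeartbeats 1000000 in
theorem stmt_0 {k V : Type*} [Field k] [IsAlgClosed k] [AddCommGroup V] [Module k V]
    [FiniteDimensional k V]
    (R Rinv : Module.End k (V ⊗[k] V)) (q : k)
    (hinv₁ : R * Rinv = 1) (hinv₂ : Rinv * R = 1)
    (hHecke : (R - q • 1) * (R - 1) = 0) (hq1 : q ≠ 1) (hq0 : q ≠ 0) :
    tensorSub (Submodule.dualAnnihilator (LinearMap.range (R - 1)))
        (LinearMap.range (R - 1)) ⊔
      tensorSub (Submodule.dualAnnihilator (LinearMap.range (R - q • 1)))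
        (LinearMap.range (R - q • 1)) =
    LinearMap.range (Rbar R Rinv - 1) := by
  have hq1' : q - 1 ≠ 0 := sub_ne_zero.mpr hq1
  have hqi1 : q⁻¹ - 1 ≠ 0 := by
    intro h
    exact hq1 (by rw [← inv_inv q, sub_eq_zero.mp h, inv_one])
  obtain ⟨P, hP, hRP, hrange1, hrange2⟩ :
      ∃ P : Module.End k (V ⊗[k] V), P * P = P ∧ R = 1 + (q - 1) • P ∧
        LinearMap.range (R - 1) = LinearMap.range P ∧
        LinearMap.range (R - q • 1) = LinearMap.range (1 - P) := by
    set u : Module.End k (V ⊗[k] V) := R - 1 with hu_def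
    have hu : u * u = (q - 1) • u := by
      have h1 : R - q • 1 = u - (q - 1) • (1 : Module.End k (V ⊗[k] V)) := by
        rw [hu_def, sub_smul, one_smul]; abel
      have h2 : (u - (q - 1) • (1 : Module.End k (V ⊗[k] V))) * u = 0 := by
        rw [← h1]; exact hHecke
      rw [sub_mul, smul_mul_assoc, one_mul, sub_eq_zero] at h2
      exact h2
    refine ⟨(q - 1)⁻¹ • u, ?_, ?_, ?_, ?_⟩
    · rw [smul_mul_assoc, mul_smul_comm, hu, smul_smul, smul_smul]
      congr 1
      field_simp
    · rw [smul_smul, mul_inv_cancel₀ hq1', one_smul, hu_def]; abel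
    · rw [LinearMap.range_smul _ _ (inv_ne_zero hq1'), hu_def]
    · have h : R - q • 1 = (-(q - 1)) • (1 - (q - 1)⁻¹ • u) := by
        rw [smul_sub, smul_smul]
        have hc : -(q - 1) * (q - 1)⁻¹ = -1 := by field_simp
        rw [hc]
        simp only [neg_smul, one_smul, sub_neg_eq_add, sub_smul]
        rw [hu_def]
        abel
      rw [h, LinearMap.range_smul _ _ (neg_ne_zero.mpr hq1')]
  -- inverse formula
  have hRmulP : R * P = q • P := by
    rw [hRP, add_mul, one_mul, smul_mul_assoc, hP, sub_smul, one_smul]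
    abel
  have hRinv : Rinv = 1 + (q⁻¹ - 1) • P := by
    have hmul : R * (1 + (q⁻¹ - 1) • P) = 1 := by
      have hc : (q - 1) + (q⁻¹ - 1) * q = 0 := by field_simp; ring
      rw [mul_add, mul_one, mul_smul_comm, hRmulP, smul_smul, hRP, add_assoc,
        ← add_smul, hc, zero_smul, add_zero]
    calc Rinv = Rinv * (R * (1 + (q⁻¹ - 1) • P)) := by rw [hmul, mul_one]
    _ = (Rinv * R) * (1 + (q⁻¹ - 1) • P) := by rw [mul_assoc]
    _ = 1 + (q⁻¹ - 1) • P := by rw [hinv₂, one_mul]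
  -- dual projection
  set Pd : Module.End k (Module.Dual k (V ⊗[k] V)) := P.dualMap with hPd_def
  have hPd : Pd * Pd = Pd := by
    have h : (P * P).dualMap = P.dualMap ∘ₗ P.dualMap := by
      rw [Module.End.mul_eq_comp, ← LinearMap.dualMap_comp_dualMap]
    rw [hPd_def, Module.End.mul_eq_comp, ← h, hP]
  have h1P : (1 - P) * (1 - P) = 1 - P := by
    rw [sub_mul, mul_sub, mul_sub, one_mul, mul_one, hP]; abel
  have h1Pd : (1 - Pd) * (1 - Pd) = 1 - Pd := by
    rw [sub_mul, mul_sub, mul_sub, one_mul, mul_one, hPd]; abel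
  -- annihilators
  have hann1 : Submodule.dualAnnihilator (LinearMap.range (R - 1)) =
      LinearMap.range (1 - Pd) := by
    rw [hrange1, ← LinearMap.ker_dualMap_eq_dualAnnihilator_range, ← hPd_def,
      ker_idem Pd hPd]
  have hann2 : Submodule.dualAnnihilator (LinearMap.range (R - q • 1)) =
      LinearMap.range Pd := by
    have hd : (1 - P).dualMap = 1 - Pd := by
      refine LinearMap.ext fun f => LinearMap.ext fun x => ?_
      simp [LinearMap.dualMap_apply, hPd_def, map_sub]
    rw [hrange2, ← LinearMap.ker_dualMap_eq_dualAnnihilator_range, hd,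
      ker_idem (1 - Pd) h1Pd]
    congr 1
    abel
  -- the two blocks
  set C : Module.End k (Module.Dual k (V ⊗[k] V) ⊗[k] (V ⊗[k] V)) :=
    TensorProduct.map Pd (1 - P) with hC_def
  set D : Module.End k (Module.Dual k (V ⊗[k] V) ⊗[k] (V ⊗[k] V)) :=
    TensorProduct.map (1 - Pd) P with hD_def
  have hLHS1 : tensorSub (Submodule.dualAnnihilator (LinearMap.range (R - 1)))
      (LinearMap.range (R - 1)) = LinearMap.range D := by
    rw [hann1, hrange1, tensorSub_range, hD_def]
  have hLHS2 : tensorSub (Submodule.dualAnnihilator (LinearMap.range (R - q • 1)))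
      (LinearMap.range (R - q • 1)) = LinearMap.range C := by
    rw [hann2, hrange2, tensorSub_range, hC_def]
  -- dual of R
  have hRd : R.dualMap = 1 + (q - 1) • Pd := by
    refine LinearMap.ext fun f => LinearMap.ext fun x => ?_
    simp only [LinearMap.dualMap_apply, LinearMap.add_apply, LinearMap.smul_apply,
      Module.End.one_apply, hPd_def]
    rw [hRP]
    simp [map_add, map_smul]
  -- key identity
  have key : Rbar R Rinv - 1 = (q - 1) • C + (q⁻¹ - 1) • D := by
    apply TensorProduct.ext'
    intro f x
    simp only [Rbar, LinearMap.sub_apply, LinearMap.add_apply, LinearMap.smul_apply,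
      Module.End.one_apply, TensorProduct.map_tmul, hC_def, hD_def]
    rw [hRd, hRinv]
    simp only [LinearMap.add_apply, LinearMap.smul_apply, LinearMap.sub_apply,
      Module.End.one_apply]
    simp only [tmul_add, tmul_sub, add_tmul, sub_tmul, tmul_smul, ← smul_tmul']
    match_scalars <;> (field_simp; try ring)
  -- algebra of C, D
  have hCC : C * C = C := by
    rw [hC_def, ← TensorProduct.map_mul, hPd, h1P]
  have hDD : D * D = D := by
    rw [hD_def, ← TensorProduct.map_mul, h1Pd, hP]
  have hCD : C * D = 0 := by
    rw [hC_def, hD_def, ← TensorProduct.map_mul]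
    have h : Pd * (1 - Pd) = 0 := by rw [mul_sub, mul_one, hPd, sub_self]
    rw [h, TensorProduct.map_zero_left]
  have hDC : D * C = 0 := by
    rw [hC_def, hD_def, ← TensorProduct.map_mul]
    have h : (1 - Pd) * Pd = 0 := by rw [sub_mul, one_mul, hPd, sub_self]
    rw [h, TensorProduct.map_zero_left]
  have hTC : (Rbar R Rinv - 1) * C = (q - 1) • C := by
    rw [key, add_mul, smul_mul_assoc, smul_mul_assoc, hCC, hDC, smul_zero, add_zero]
  have hTD : (Rbar R Rinv - 1) * D = (q⁻¹ - 1) • D := by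
    rw [key, add_mul, smul_mul_assoc, smul_mul_assoc, hDD, hCD, smul_zero, zero_add]
  rw [hLHS1, hLHS2]
  apply le_antisymm
  · apply sup_le
    · rintro _ ⟨x, rfl⟩
      refine ⟨(q⁻¹ - 1)⁻¹ • D x, ?_⟩
      have h := congrArg (fun g => g x) hTD
      simp only [Module.End.mul_apply, LinearMap.smul_apply] at h
      rw [map_smul, h, smul_smul, inv_mul_cancel₀ hqi1, one_smul]
    · rintro _ ⟨x, rfl⟩
      refine ⟨(q - 1)⁻¹ • C x, ?_⟩
      have h := congrArg (fun g => g x) hTC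
      simp only [Module.End.mul_apply, LinearMap.smul_apply] at h
      rw [map_smul, h, smul_smul, inv_mul_cancel₀ hq1', one_smul]
  · rintro _ ⟨x, rfl⟩
    have h := congrArg (fun g => g x) key
    simp only [LinearMap.sub_apply, LinearMap.add_apply, LinearMap.smul_apply] at h
    rw [show (Rbar R Rinv - 1) x = (q - 1) • C x + (q⁻¹ - 1) • D x from h]
    exact Submodule.add_mem _
      (Submodule.mem_sup_right (Submodule.smul_mem _ _ ⟨x, rfl⟩))
      (Submodule.mem_sup_left (Submodule.smul_mem _ _ ⟨x, rfl⟩))
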